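/- For every odd prime p, ∑_{k=1}^{(p-1)/2} 1/k ≡ -2·q_p(2) + p·q_p(2)^2 (mod p^2), where q_p(2) = (2^{p-1}-1)/p, as a congruence of p-adic integers. -/

import Mathlib

open Finset

lemma sum_Icc_reflect {M : Type*} [AddCommMonoid M] (f : ℕ → M) (n : ℕ) :
    ∑ k ∈ Icc 1 n, f (n + 1 - k) = ∑ k ∈ Icc 1 n, f k := by
  refine Finset.sum_nbij' (fun k => n + 1 - k) (fun k => n + 1 - k)
    (fun a ha => ?_) (fun a ha => ?_) (fun a ha => ?_) (fun a ha => ?_) (fun a ha => ?_) <;>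
    simp only [mem_Icc] at * <;> first | omega | (congr 1; omega)

lemma pair_sum {M : Type*} [AddCommMonoid M] (f : ℕ → M) (n : ℕ) :
    ∑ k ∈ range (2 * n + 1), f k = f 0 + ∑ j ∈ Icc 1 n, (f (2 * j) + f (2 * j - 1)) := by
  induction n with
  | zero => simp
  | succ n ih =>
    have h1 : 2 * (n + 1) + 1 = (2 * n + 1) + 1 + 1 := by ring
    rw [h1, Finset.sum_range_succ, Finset.sum_range_succ, ih,
      Finset.sum_Icc_succ_top (by omega : 1 ≤ n + 1)]
    have e1 : 2 * (n + 1) = 2 * n + 2 := by ring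
    have e2 : 2 * n + 2 - 1 = 2 * n + 1 := by omega
    rw [e1, e2]
    abel

lemma partial_frac {K : Type*} [Field K] {a b c : K} (ha : a ≠ 0) (hb : b ≠ 0) (hc : c ≠ 0)
    (h : a + b = c) : a⁻¹ * b⁻¹ = c⁻¹ * (a⁻¹ + b⁻¹) := by
  subst h
  field_simp
  ring


section ZModPart
variable (p : ℕ) [hp : Fact p.Prime]

noncomputable def hz (n : ℕ) : ZMod p := ∑ k ∈ Icc 1 n, ((k : ZMod p))⁻¹
noncomputable def wz (n : ℕ) : ZMod p := ∑ k ∈ Icc 1 n, ((k : ZMod p))⁻¹ ^ 2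
noncomputable def Oz (j : ℕ) : ZMod p := ∑ i ∈ Icc 1 j, (((2 * i - 1 : ℕ) : ZMod p))⁻¹

variable {p}

lemma zcast_ne {k : ℕ} (h1 : 1 ≤ k) (h2 : k < p) : ((k : ZMod p)) ≠ 0 := by
  intro h
  have := (ZMod.natCast_eq_zero_iff k p).mp h
  have := Nat.le_of_dvd (by omega) this
  omega

lemma neg_inv_pair {a b : ℕ} (hab : a + b = p) : ((a : ZMod p))⁻¹ = -((b : ZMod p))⁻¹ := by
  have h : ((a : ZMod p)) = -((b : ZMod p)) := by
    have : ((a : ZMod p)) + ((b : ZMod p)) = ((p : ZMod p)) := by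
      rw [← Nat.cast_add, hab]
    rw [ZMod.natCast_self] at this
    linear_combination this
  rw [h, inv_neg]

lemma hz_succ (n : ℕ) : hz p (n + 1) = hz p n + (((n + 1 : ℕ) : ZMod p))⁻¹ := by
  rw [hz, hz, Finset.sum_Icc_succ_top (by omega : 1 ≤ n + 1)]

lemma hz_eq {a b : ℕ} (h : a = b + 1) : hz p a = hz p b + ((a : ZMod p))⁻¹ := by
  rw [h]; exact hz_succ b

lemma Oz_eq {a b : ℕ} (h : a = b + 1) :
    Oz p a = Oz p b + (((2 * a - 1 : ℕ)) : ZMod p)⁻¹ := by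
  rw [h, Oz, Oz, Finset.sum_Icc_succ_top (by omega : 1 ≤ b + 1)]

lemma wz_eq {a b : ℕ} (h : a = b + 1) : wz p a = wz p b + ((a : ZMod p))⁻¹ ^ 2 := by
  rw [h, wz, wz, Finset.sum_Icc_succ_top (by omega : 1 ≤ b + 1)]

end ZModPart

section ZModMain
variable {p : ℕ} [hp : Fact p.Prime]

lemma two_ne' (h3 : 3 ≤ p) : (2 : ZMod p) ≠ 0 := by
  have := zcast_ne (p := p) (k := 2) (by omega) (by omega)
  simpa using this

lemma two_inv_nat (h3 : 3 ≤ p) (j : ℕ) :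
    2 * (((2 * j : ℕ)) : ZMod p)⁻¹ = ((j : ZMod p))⁻¹ := by
  push_cast
  rw [mul_inv]
  rw [← mul_assoc, mul_inv_cancel₀ (two_ne' h3), one_mul]

lemma Z1 (m : ℕ) (hpm : p = 2 * m + 1) :
    ∀ j, 1 ≤ j → j ≤ m → 2 * hz p (2 * j - 1) = hz p (j - 1) + 2 * Oz p j := by
  have h3 : 3 ≤ p := by have := hp.out.two_le; omega
  intro j hj
  induction j, hj using Nat.le_induction with
  | base =>
    intro _
    norm_num [hz, Oz]
  | succ j hj ih =>
    intro hjm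
    have ihh := ih (by omega)
    have e1 : 2 * (j + 1) - 1 = 2 * j + 1 := by omega
    have e2 : j + 1 - 1 = j := by omega
    rw [e1, e2]
    have h1 : hz p (2 * j + 1) = hz p (2 * j) + (((2 * j + 1 : ℕ)) : ZMod p)⁻¹ :=
      hz_eq rfl
    have h2 : hz p (2 * j) = hz p (2 * j - 1) + (((2 * j : ℕ)) : ZMod p)⁻¹ :=
      hz_eq (by omega)
    have h4 : hz p j = hz p (j - 1) + ((j : ZMod p))⁻¹ := hz_eq (by omega)
    have h5 : Oz p (j + 1) = Oz p j + (((2 * (j + 1) - 1 : ℕ)) : ZMod p)⁻¹ := Oz_eq rfl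
    rw [e1] at h5
    have h6 := two_inv_nat (p := p) h3 j
    rw [h1, h2, h4, h5]
    linear_combination ihh + h6

lemma Z2 (m : ℕ) (hpm : p = 2 * m + 1) :
    ∀ j, 1 ≤ j → j ≤ m → 2 * Oz p j = hz p (m - j) - hz p m := by
  have h3 : 3 ≤ p := by have := hp.out.two_le; omega
  intro j hj
  induction j, hj using Nat.le_induction with
  | base =>
    intro h1m
    have hOz : Oz p 1 = 1 := by norm_num [Oz]
    have hpair := neg_inv_pair (p := p) (a := 2 * m) (b := 1) (by omega)
    have h6 := two_inv_nat (p := p) h3 m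
    rw [hpair] at h6
    have hm : hz p m = hz p (m - 1) + ((m : ZMod p))⁻¹ := hz_eq (by omega)
    rw [hOz, hm]
    push_cast at h6 ⊢
    norm_num at h6
    linear_combination -h6
  | succ j hj ih =>
    intro hjm
    have ihh := ih (by omega)
    have h5 : Oz p (j + 1) = Oz p j + (((2 * (j + 1) - 1 : ℕ)) : ZMod p)⁻¹ := Oz_eq rfl
    have e1 : 2 * (j + 1) - 1 = 2 * j + 1 := by omega
    rw [e1] at h5
    have hpair : (((2 * j + 1 : ℕ)) : ZMod p)⁻¹ = -(((2 * (m - j) : ℕ)) : ZMod p)⁻¹ :=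
      neg_inv_pair (by omega)
    have h6 := two_inv_nat (p := p) h3 (m - j)
    have hmj : hz p (m - j) = hz p (m - (j + 1)) + (((m - j : ℕ)) : ZMod p)⁻¹ :=
      hz_eq (by omega)
    rw [h5]
    linear_combination ihh + hmj + 2 * hpair - h6

end ZModMain

section ZMod2
variable {p : ℕ} [hp : Fact p.Prime]

lemma Z3 : ∀ n : ℕ, 2 * (∑ j ∈ Icc 1 n, ((j : ZMod p))⁻¹ * hz p (j - 1))
    = hz p n ^ 2 - wz p n := by
  intro n
  induction n with
  | zero => simp [hz, wz]
  | succ n ih =>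
    rw [Finset.sum_Icc_succ_top (by omega : 1 ≤ n + 1)]
    have e2 : n + 1 - 1 = n := by omega
    rw [e2]
    have h1 : hz p (n + 1) = hz p n + (((n + 1 : ℕ)) : ZMod p)⁻¹ := hz_eq rfl
    have h2 : wz p (n + 1) = wz p n + (((n + 1 : ℕ)) : ZMod p)⁻¹ ^ 2 := wz_eq rfl
    rw [h1, h2]
    linear_combination ih

lemma Z4 : ∀ n : ℕ, n < p → ∑ j ∈ Icc 1 n, ((j : ZMod p))⁻¹ * hz p (n - j)
    = hz p n ^ 2 - wz p n := by
  intro n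
  induction n with
  | zero => simp [hz, wz]
  | succ n ih =>
    intro hn1
    have ihh := ih (by omega)
    rw [Finset.sum_Icc_succ_top (by omega : 1 ≤ n + 1)]
    have e2 : n + 1 - (n + 1) = 0 := by omega
    rw [e2]
    have hz0 : hz p 0 = 0 := by simp [hz]
    have hstep : ∀ j ∈ Icc 1 n, ((j : ZMod p))⁻¹ * hz p (n + 1 - j)
        = ((j : ZMod p))⁻¹ * hz p (n - j)
          + (((n + 1 : ℕ)) : ZMod p)⁻¹ * (((j : ZMod p))⁻¹ + (((n + 1 - j : ℕ)) : ZMod p)⁻¹) := by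
      intro j hj
      simp only [mem_Icc] at hj
      have hh : hz p (n + 1 - j) = hz p (n - j) + (((n + 1 - j : ℕ)) : ZMod p)⁻¹ :=
        hz_eq (by omega)
      have hja : ((j : ZMod p)) ≠ 0 := zcast_ne (by omega) (by omega)
      have hjb : (((n + 1 - j : ℕ)) : ZMod p) ≠ 0 := zcast_ne (by omega) (by omega)
      have hjc : (((n + 1 : ℕ)) : ZMod p) ≠ 0 := zcast_ne (by omega) (by omega)
      have hsum : ((j : ZMod p)) + (((n + 1 - j : ℕ)) : ZMod p) = (((n + 1 : ℕ)) : ZMod p) := by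
        rw [← Nat.cast_add]
        congr 1
        omega
      have hpf := partial_frac hja hjb hjc hsum
      rw [hh]
      linear_combination hpf
    rw [Finset.sum_congr rfl hstep]
    rw [Finset.sum_add_distrib, ← Finset.mul_sum, Finset.sum_add_distrib]
    have hrefl : ∑ j ∈ Icc 1 n, (((n + 1 - j : ℕ)) : ZMod p)⁻¹ = hz p n :=
      sum_Icc_reflect (fun k => ((k : ZMod p))⁻¹) n
    rw [hrefl]
    have hhz : ∑ j ∈ Icc 1 n, ((j : ZMod p))⁻¹ = hz p n := rfl
    rw [hhz, ihh]
    have h1 : hz p (n + 1) = hz p n + (((n + 1 : ℕ)) : ZMod p)⁻¹ := hz_eq rfl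
    have h2 : wz p (n + 1) = wz p n + (((n + 1 : ℕ)) : ZMod p)⁻¹ ^ 2 := wz_eq rfl
    rw [h1, h2, hz0]
    ring

end ZMod2

section T
variable {p : ℕ} [hp : Fact p.Prime]
lemma sum_inv_sq_all (h5 : 5 ≤ p) (m : ℕ) (hpm : p = 2 * m + 1) :
    ∑ k ∈ Icc 1 (2 * m), ((k : ZMod p))⁻¹ ^ 2 = 0 := by
  classical
  have h1 : ∑ k ∈ Icc 1 (2 * m), ((k : ZMod p))⁻¹ ^ 2
      = ∑ x ∈ (univ : Finset (ZMod p)).erase 0, (x⁻¹) ^ 2 := by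
    refine Finset.sum_nbij' (fun k => (k : ZMod p)) (fun x => x.val) ?_ ?_ ?_ ?_ ?_
    · intro a ha
      simp only [mem_Icc] at ha
      exact Finset.mem_erase.mpr ⟨zcast_ne (by omega) (by omega), Finset.mem_univ _⟩
    · intro x hx
      simp only [Finset.mem_erase] at hx
      have hv : x.val < p := ZMod.val_lt x
      have hv0 : x.val ≠ 0 := fun h => hx.1 (by
        have := ZMod.natCast_zmod_val x
        rw [h] at this
        simpa using this.symm)
      simp only [mem_Icc]
      omega
    · intro a ha
      simp only [mem_Icc] at ha
      exact ZMod.val_cast_of_lt (by omega)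
    · intro x hx
      exact ZMod.natCast_zmod_val x
    · intro a ha
      rfl
  rw [h1]
  have h2 : ∑ x ∈ (univ : Finset (ZMod p)).erase 0, (x⁻¹) ^ 2
      = ∑ x : ZMod p, (x⁻¹) ^ 2 := by
    rw [← Finset.sum_erase_add _ _ (Finset.mem_univ (0 : ZMod p))]
    simp
  rw [h2]
  have h3 : ∑ x : ZMod p, (x⁻¹) ^ 2 = ∑ x : ZMod p, x ^ 2 := by
    exact Equiv.sum_comp (Equiv.inv (ZMod p)) (fun x => x ^ 2)
  rw [h3]
  have hcard : Fintype.card (ZMod p) = p := ZMod.card p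
  have := FiniteField.sum_pow_lt_card_sub_one (ZMod p) 2 (by rw [hcard]; omega)
  exact this


end T

section ZMod3
variable {p : ℕ} [hp : Fact p.Prime]

lemma wz_double (m : ℕ) (hpm : p = 2 * m + 1) :
    ∑ k ∈ Icc 1 (2 * m), ((k : ZMod p))⁻¹ ^ 2 = 2 * wz p m := by
  classical
  have hsplit : Icc 1 (2 * m) = Icc 1 m ∪ Ioc m (2 * m) := by
    rw [show (1:ℕ) = 0 + 1 from rfl, Finset.Icc_add_one_left_eq_Ioc, Finset.Icc_add_one_left_eq_Ioc, Finset.Ioc_union_Ioc_eq_Ioc (by omega) (by omega)]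
  have hdisj : Disjoint (Icc 1 m) (Ioc m (2 * m)) := by
    rw [Finset.disjoint_left]
    intro a ha hb
    simp only [mem_Icc, mem_Ioc] at *
    omega
  rw [hsplit, Finset.sum_union hdisj]
  have hsecond : ∑ k ∈ Ioc m (2 * m), ((k : ZMod p))⁻¹ ^ 2
      = ∑ k ∈ Icc 1 m, ((k : ZMod p))⁻¹ ^ 2 := by
    have h1 : ∑ k ∈ Ioc m (2 * m), ((k : ZMod p))⁻¹ ^ 2
        = ∑ k ∈ Icc 1 m, (((k + m : ℕ) : ZMod p))⁻¹ ^ 2 := by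
      refine Finset.sum_nbij' (fun k => k - m) (fun k => k + m)
        (fun a ha => ?_) (fun a ha => ?_) (fun a ha => ?_) (fun a ha => ?_) (fun a ha => ?_) <;>
        simp only [mem_Icc, mem_Ioc] at *
      · omega
      · omega
      · omega
      · omega
      · have e : a - m + m = a := by omega
        rw [e]
    rw [h1]
    have h2 : ∀ k ∈ Icc 1 m, (((k + m : ℕ) : ZMod p))⁻¹ ^ 2
        = (((m + 1 - k : ℕ) : ZMod p))⁻¹ ^ 2 := by
      intro k hk
      simp only [mem_Icc] at hk
      have hnp := neg_inv_pair (p := p) (a := k + m) (b := m + 1 - k) (by omega)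
      rw [hnp]
      ring
    rw [Finset.sum_congr rfl h2]
    exact sum_Icc_reflect (fun k => ((k : ZMod p))⁻¹ ^ 2) m
  rw [hsecond]
  rw [wz]
  ring

lemma Z6 (m : ℕ) (hpm : p = 2 * m + 1) : 3 * wz p m = 0 := by
  by_cases h3 : p = 3
  · subst h3
    have h0 : (3 : ZMod 3) = 0 := by
      have := ZMod.natCast_self 3
      exact_mod_cast this
    rw [h0, zero_mul]
  · have h2 : 2 ≤ p := hp.out.two_le
    have h5 : 5 ≤ p := by omega
    have hzero := sum_inv_sq_all h5 m hpm
    rw [wz_double m hpm] at hzero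
    have h2ne : (2 : ZMod p) ≠ 0 := two_ne' (by omega)
    have hw : wz p m = 0 := by
      rcases mul_eq_zero.mp hzero with h | h
      · exact absurd h h2ne
      · exact h
    rw [hw, mul_zero]

end ZMod3

section ZModKey
variable {p : ℕ} [hp : Fact p.Prime]

lemma zmod_key (m : ℕ) (hpm : p = 2 * m + 1) :
    2 * (∑ j ∈ Icc 1 m, (((2 * j : ℕ)) : ZMod p)⁻¹ * hz p (2 * j - 1))
      - (∑ j ∈ Icc 1 m, (((2 * j : ℕ)) : ZMod p)⁻¹) ^ 2 = 0 := by
  have h3 : 3 ≤ p := by have := hp.out.two_le; omega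
  set K := ZMod p
  set Sz := ∑ j ∈ Icc 1 m, (((2 * j : ℕ)) : ZMod p)⁻¹ * hz p (2 * j - 1) with hSz
  set Gz := ∑ j ∈ Icc 1 m, (((2 * j : ℕ)) : ZMod p)⁻¹ with hGz
  have h2G : 2 * Gz = hz p m := by
    rw [hGz, Finset.mul_sum]
    rw [show hz p m = ∑ j ∈ Icc 1 m, ((j : ZMod p))⁻¹ from rfl]
    exact Finset.sum_congr rfl (fun j _ => two_inv_nat h3 j)
  have hterm : ∀ j ∈ Icc 1 m, (8 : ZMod p) * ((((2 * j : ℕ)) : ZMod p)⁻¹ * hz p (2 * j - 1))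
      = 2 * (((j : ZMod p))⁻¹ * hz p (j - 1)) + 2 * (((j : ZMod p))⁻¹ * hz p (m - j))
        - 2 * ((j : ZMod p))⁻¹ * hz p m := by
    intro j hj
    simp only [mem_Icc] at hj
    have t1 := two_inv_nat (p := p) h3 j
    have t2 := Z1 m hpm j hj.1 hj.2
    have t3 := Z2 m hpm j hj.1 hj.2
    linear_combination (4 * hz p (2 * j - 1)) * t1 + (2 * ((j : ZMod p))⁻¹) * t2
      + (2 * ((j : ZMod p))⁻¹) * t3
  have h8S : 8 * Sz = hz p m ^ 2 - 3 * wz p m := by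
    have hA := Z3 (p := p) m
    have hB := Z4 (p := p) m (by omega)
    have hsum : (8 : ZMod p) * Sz
        = ∑ j ∈ Icc 1 m, (2 * (((j : ZMod p))⁻¹ * hz p (j - 1))
            + 2 * (((j : ZMod p))⁻¹ * hz p (m - j)) - 2 * ((j : ZMod p))⁻¹ * hz p m) := by
      rw [hSz, Finset.mul_sum]
      exact Finset.sum_congr rfl hterm
    rw [hsum, Finset.sum_sub_distrib, Finset.sum_add_distrib]
    rw [← Finset.mul_sum, ← Finset.mul_sum, ← Finset.sum_mul, ← Finset.mul_sum]
    have hhz : ∑ j ∈ Icc 1 m, ((j : ZMod p))⁻¹ = hz p m := rfl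
    rw [hhz, hA, hB]
    ring
  have h6 := Z6 m hpm
  have h8ne : (8 : ZMod p) ≠ 0 := by
    have h2ne : (2 : ZMod p) ≠ 0 := two_ne' h3
    have : (8 : ZMod p) = 2 ^ 3 := by norm_num
    rw [this]
    exact pow_ne_zero 3 h2ne
  apply mul_left_cancel₀ h8ne
  rw [mul_zero]
  linear_combination 2 * h8S - 2 * h6 + (-2 * (2 * Gz + hz p m)) * h2G
end ZModKey

section PadicPart
variable {p : ℕ} [hp : Fact p.Prime]

noncomputable def iv (p : ℕ) [Fact p.Prime] (k : ℕ) : ℤ_[p] := Ring.inverse ((k : ℕ) : ℤ_[p])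

lemma isUnit_cast {k : ℕ} (h : ¬ p ∣ k) : IsUnit ((k : ℕ) : ℤ_[p]) := by
  by_contra hc
  have h1 : ((k : ℕ) : ℤ_[p]) ∈ IsLocalRing.maximalIdeal ℤ_[p] := hc
  rw [← PadicInt.ker_toZMod, RingHom.mem_ker, map_natCast] at h1
  exact h ((ZMod.natCast_eq_zero_iff k p).mp h1)

lemma not_dvd_of_lt {k : ℕ} (h1 : 1 ≤ k) (h2 : k < p) : ¬ p ∣ k := by
  intro hd
  have := Nat.le_of_dvd (by omega) hd
  omega

lemma iv_mul {k : ℕ} (h : ¬ p ∣ k) : ((k : ℕ) : ℤ_[p]) * iv p k = 1 :=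
  Ring.mul_inverse_cancel _ (isUnit_cast h)

lemma toZMod_iv {k : ℕ} (h : ¬ p ∣ k) :
    PadicInt.toZMod (iv p k) = ((k : ZMod p))⁻¹ := by
  have h2 := congrArg PadicInt.toZMod (iv_mul (p := p) h)
  rw [map_mul, map_one, map_natCast] at h2
  exact eq_inv_of_mul_eq_one_left (by rw [mul_comm] at h2; exact h2)

lemma coe_iv {k : ℕ} (h : ¬ p ∣ k) : ((iv p k : ℤ_[p]) : ℚ_[p]) = ((k : ℚ_[p]))⁻¹ := by
  have h2 := congrArg (PadicInt.Coe.ringHom (p := p)) (iv_mul (p := p) h)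
  rw [map_mul, map_one, map_natCast] at h2
  exact eq_inv_of_mul_eq_one_left (by rw [mul_comm] at h2; exact h2)

noncomputable def HH (p : ℕ) [Fact p.Prime] (n : ℕ) : ℤ_[p] := ∑ k ∈ Icc 1 n, iv p k
noncomputable def SG (p : ℕ) [Fact p.Prime] (n : ℕ) : ℤ_[p] :=
  ∑ j ∈ Icc 1 n, iv p j * HH p (j - 1)

lemma HH_eq {a b : ℕ} (h : a = b + 1) : HH p a = HH p b + iv p a := by
  rw [h, HH, HH, Finset.sum_Icc_succ_top (by omega : 1 ≤ b + 1)]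

lemma SG_eq {a b : ℕ} (h : a = b + 1) : SG p a = SG p b + iv p a * HH p (a - 1) := by
  rw [h, SG, SG, Finset.sum_Icc_succ_top (by omega : 1 ≤ b + 1)]

lemma choose_exp : ∀ k : ℕ, k ≤ p - 1 →
    ∃ D : ℤ_[p], (-1) ^ k * (((p - 1).choose k : ℕ) : ℤ_[p])
      = 1 - p * HH p k + p ^ 2 * SG p k + p ^ 3 * D := by
  have hp2 : 2 ≤ p := hp.out.two_le
  intro k
  induction k with
  | zero =>
    intro _
    exact ⟨0, by norm_num [HH, SG]⟩
  | succ k ih =>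
    intro hk1
    obtain ⟨D, hD⟩ := ih (by omega)
    have hnd : ¬ p ∣ (k + 1) := not_dvd_of_lt (by omega) (by omega)
    have hu : (((k + 1 : ℕ)) : ℤ_[p]) * iv p (k + 1) = 1 := iv_mul hnd
    have hcast : (((p - 1).choose (k + 1) : ℕ) : ℤ_[p]) * (((k + 1 : ℕ)) : ℤ_[p])
        = (((p - 1).choose k : ℕ) : ℤ_[p]) * (((p : ℕ) : ℤ_[p]) - (((k + 1 : ℕ)) : ℤ_[p])) := by
      have h0 := Nat.choose_succ_right_eq (p - 1) k
      have h1 := congrArg (fun n : ℕ => (n : ℤ_[p])) h0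
      push_cast at h1
      have e : (((p - 1 - k : ℕ)) : ℤ_[p]) = (p : ℤ_[p]) - (((k + 1 : ℕ)) : ℤ_[p]) := by
        have e2 : p - 1 - k = p - (k + 1) := by omega
        rw [e2, Nat.cast_sub (by omega : k + 1 ≤ p)]
      push_cast at e ⊢
      linear_combination h1 + (((p - 1).choose k : ℕ) : ℤ_[p]) * e
    have hck : (((p - 1).choose (k + 1) : ℕ) : ℤ_[p])
        = (((p - 1).choose k : ℕ) : ℤ_[p]) * ((p : ℤ_[p]) * iv p (k + 1) - 1) := by
      have hpc : ((p : ℕ) : ℤ_[p]) = (p : ℤ_[p]) := rfl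
      linear_combination (iv p (k + 1)) * hcast
        + (-(((p - 1).choose (k + 1) : ℕ) : ℤ_[p]) - (((p - 1).choose k : ℕ) : ℤ_[p])) * hu
    refine ⟨-(iv p (k + 1) * SG p k) + D * (1 - (p : ℤ_[p]) * iv p (k + 1)), ?_⟩
    rw [HH_eq (rfl : k + 1 = k + 1), SG_eq (rfl : k + 1 = k + 1)]
    have e2 : k + 1 - 1 = k := by omega
    rw [e2]
    linear_combination ((-1 : ℤ_[p]) ^ (k + 1)) * hck
      + (1 - (p : ℤ_[p]) * iv p (k + 1)) * hD

end PadicPart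

section PadicMain
variable {p : ℕ} [hp : Fact p.Prime]

lemma padic_main (m : ℕ) (hpm : p = 2 * m + 1) :
    ∃ E : ℤ_[p], ((2 : ℤ_[p])) ^ (p - 1)
      = 1 - p * (∑ j ∈ Icc 1 m, iv p (2 * j))
        + p ^ 2 * (∑ j ∈ Icc 1 m, iv p (2 * j) * HH p (2 * j - 1)) + p ^ 3 * E := by
  have hp2 : 2 ≤ p := hp.out.two_le
  have hkey : ∀ j ∈ Icc 1 m, ∃ D : ℤ_[p],
      (((p - 1).choose (2 * j) : ℕ) : ℤ_[p]) + (((p - 1).choose (2 * j - 1) : ℕ) : ℤ_[p])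
        = -(p : ℤ_[p]) * iv p (2 * j) + (p : ℤ_[p]) ^ 2 * (iv p (2 * j) * HH p (2 * j - 1))
          + (p : ℤ_[p]) ^ 3 * D := by
    intro j hj
    simp only [mem_Icc] at hj
    obtain ⟨D1, hD1⟩ := choose_exp (p := p) (2 * j) (by omega)
    obtain ⟨D2, hD2⟩ := choose_exp (p := p) (2 * j - 1) (by omega)
    have he : (-1 : ℤ_[p]) ^ (2 * j) = 1 := Even.neg_one_pow (even_two_mul j)
    have ho : (-1 : ℤ_[p]) ^ (2 * j - 1) = -1 := Odd.neg_one_pow ⟨j - 1, by omega⟩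
    rw [he] at hD1
    rw [ho] at hD2
    have hH : HH p (2 * j) = HH p (2 * j - 1) + iv p (2 * j) := HH_eq (by omega)
    have hS : SG p (2 * j) = SG p (2 * j - 1) + iv p (2 * j) * HH p (2 * j - 1) := by
      have := SG_eq (p := p) (a := 2 * j) (b := 2 * j - 1) (by omega)
      rw [this]
    refine ⟨D1 - D2, ?_⟩
    rw [hH, hS] at hD1
    linear_combination hD1 - hD2
  choose Df hDf using hkey
  refine ⟨∑ j ∈ (Icc 1 m).attach, Df j.1 j.2, ?_⟩
  have h1 : ((2 : ℤ_[p])) ^ (p - 1) = ∑ k ∈ range p, (((p - 1).choose k : ℕ) : ℤ_[p]) := by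
    have h0 := Nat.sum_range_choose (p - 1)
    have e : p - 1 + 1 = p := by omega
    rw [e] at h0
    have h2 := congrArg (fun n : ℕ => (n : ℤ_[p])) h0
    push_cast at h2
    rw [← h2]
  have hr : range p = range (2 * m + 1) := by rw [hpm]
  rw [h1, hr, pair_sum (fun k => (((p - 1).choose k : ℕ) : ℤ_[p])) m]
  have hf0 : (((p - 1).choose 0 : ℕ) : ℤ_[p]) = 1 := by norm_num
  rw [hf0]
  rw [← Finset.sum_attach (Icc 1 m)
    (fun j => (((p - 1).choose (2 * j) : ℕ) : ℤ_[p]) + (((p - 1).choose (2 * j - 1) : ℕ) : ℤ_[p]))]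
  rw [Finset.sum_congr rfl (fun j hj => hDf j.1 j.2)]
  rw [Finset.sum_add_distrib, Finset.sum_add_distrib, ← Finset.mul_sum, ← Finset.mul_sum,
    ← Finset.mul_sum]
  rw [Finset.sum_attach (Icc 1 m) (fun j => iv p (2 * j)),
    Finset.sum_attach (Icc 1 m) (fun j => iv p (2 * j) * HH p (2 * j - 1))]
  push_cast
  ring

lemma padic_bridge (m : ℕ) (hpm : p = 2 * m + 1) :
    ∃ V : ℤ_[p], 2 * (∑ j ∈ Icc 1 m, iv p (2 * j) * HH p (2 * j - 1))
      - (∑ j ∈ Icc 1 m, iv p (2 * j)) ^ 2 = p * V := by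
  have hp2 : 2 ≤ p := hp.out.two_le
  set x := 2 * (∑ j ∈ Icc 1 m, iv p (2 * j) * HH p (2 * j - 1))
      - (∑ j ∈ Icc 1 m, iv p (2 * j)) ^ 2 with hx
  have hker : PadicInt.toZMod x = 0 := by
    have hG : PadicInt.toZMod (∑ j ∈ Icc 1 m, iv p (2 * j))
        = ∑ j ∈ Icc 1 m, (((2 * j : ℕ)) : ZMod p)⁻¹ := by
      rw [map_sum]
      refine Finset.sum_congr rfl (fun j hj => ?_)
      simp only [mem_Icc] at hj
      exact toZMod_iv (not_dvd_of_lt (by omega) (by omega))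
    have hS : PadicInt.toZMod (∑ j ∈ Icc 1 m, iv p (2 * j) * HH p (2 * j - 1))
        = ∑ j ∈ Icc 1 m, (((2 * j : ℕ)) : ZMod p)⁻¹ * hz p (2 * j - 1) := by
      rw [map_sum]
      refine Finset.sum_congr rfl (fun j hj => ?_)
      simp only [mem_Icc] at hj
      rw [map_mul, toZMod_iv (not_dvd_of_lt (by omega) (by omega))]
      congr 1
      rw [HH, map_sum]
      refine Finset.sum_congr rfl (fun k hk => ?_)
      simp only [mem_Icc] at hk
      exact toZMod_iv (not_dvd_of_lt (by omega) (by omega))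
    rw [hx, map_sub, map_mul, map_pow, map_ofNat, hG, hS]
    exact zmod_key m hpm
  have hmem : x ∈ Ideal.span {(p : ℤ_[p])} := by
    rw [← PadicInt.maximalIdeal_eq_span_p, ← PadicInt.ker_toZMod, RingHom.mem_ker]
    exact hker
  obtain ⟨V, hV⟩ := Ideal.mem_span_singleton.mp hmem
  exact ⟨V, hV⟩

end PadicMain

/-- Lehmer (1938): for an odd prime `p`, with `q = q_p(2) = (2^{p-1}-1)/p`,
`∑_{k=1}^{(p-1)/2} 1/k ≡ -2q + p·q² (mod p²)` in `ℤ_p`. -/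
theorem lehmer_half (p : ℕ) [hp : Fact p.Prime] (hodd : Odd p)
    (q : ℚ) (hq : q = ((2 ^ (p - 1) - 1 : ℚ)) / p) :
    ∃ z : ℤ_[p],
      (∑ k ∈ Finset.Icc 1 ((p - 1) / 2), (1 : ℚ_[p]) / (k : ℚ_[p])) -
        (-2 * (q : ℚ_[p]) + (p : ℚ_[p]) * (q : ℚ_[p]) ^ 2)
      = (p : ℚ_[p]) ^ 2 * (z : ℚ_[p]) := by
  have hp2 : 2 ≤ p := hp.out.two_le
  obtain ⟨m, hm⟩ := hodd
  have hpm : p = 2 * m + 1 := by omega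
  have hm2 : (p - 1) / 2 = m := by omega
  obtain ⟨E, hE⟩ := padic_main m hpm
  obtain ⟨V, hV⟩ := padic_bridge m hpm
  set GG : ℤ_[p] := ∑ j ∈ Icc 1 m, iv p (2 * j) with hGG
  set SS : ℤ_[p] := ∑ j ∈ Icc 1 m, iv p (2 * j) * HH p (2 * j - 1) with hSS
  -- coerce main equation to ℚ_[p]
  have hEq : (2 : ℚ_[p]) ^ (p - 1)
      = 1 - (p : ℚ_[p]) * ((GG : ℤ_[p]) : ℚ_[p]) + (p : ℚ_[p]) ^ 2 * ((SS : ℤ_[p]) : ℚ_[p])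
        + (p : ℚ_[p]) ^ 3 * ((E : ℤ_[p]) : ℚ_[p]) := by
    have := congrArg (PadicInt.Coe.ringHom (p := p)) hE
    push_cast at this
    exact_mod_cast this
  have hVq : 2 * ((SS : ℤ_[p]) : ℚ_[p]) - ((GG : ℤ_[p]) : ℚ_[p]) ^ 2
      = (p : ℚ_[p]) * ((V : ℤ_[p]) : ℚ_[p]) := by
    have := congrArg (PadicInt.Coe.ringHom (p := p)) hV
    push_cast at this
    exact_mod_cast this
  -- q equation
  have hpq0 : (p : ℚ) ≠ 0 := by
    exact_mod_cast (by omega : p ≠ 0)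
  have hq1 : (q : ℚ) * p = 2 ^ (p - 1) - 1 := by
    rw [hq]
    field_simp
  have hq2 : (q : ℚ_[p]) * (p : ℚ_[p]) = 2 ^ (p - 1) - 1 := by
    have := congrArg (fun x : ℚ => (x : ℚ_[p])) hq1
    push_cast at this
    exact this
  have hpq : (p : ℚ_[p]) ≠ 0 := by
    exact_mod_cast (by omega : p ≠ 0)
  have hqq : (q : ℚ_[p]) = -((GG : ℤ_[p]) : ℚ_[p]) + (p : ℚ_[p]) * ((SS : ℤ_[p]) : ℚ_[p])
      + (p : ℚ_[p]) ^ 2 * ((E : ℤ_[p]) : ℚ_[p]) := by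
    apply mul_left_cancel₀ hpq
    rw [mul_comm ((p : ℚ_[p])) (q : ℚ_[p])] at *
    linear_combination hq2 + hEq
  -- the sum equals 2 * GG
  have hA : (∑ k ∈ Finset.Icc 1 ((p - 1) / 2), (1 : ℚ_[p]) / (k : ℚ_[p]))
      = 2 * ((GG : ℤ_[p]) : ℚ_[p]) := by
    rw [hm2]
    have hGq : ((GG : ℤ_[p]) : ℚ_[p]) = ∑ j ∈ Icc 1 m, ((iv p (2 * j) : ℤ_[p]) : ℚ_[p]) := by
      rw [hGG]
      exact map_sum (PadicInt.Coe.ringHom (p := p)) _ _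
    rw [hGq, Finset.mul_sum]
    refine Finset.sum_congr rfl (fun k hk => ?_)
    simp only [mem_Icc] at hk
    have hcoe : ((iv p (2 * k) : ℤ_[p]) : ℚ_[p]) = (((2 * k : ℕ)) : ℚ_[p])⁻¹ :=
      coe_iv (not_dvd_of_lt (by omega) (by omega))
    rw [hcoe]
    have hk0 : ((k : ℚ_[p])) ≠ 0 := by
      exact_mod_cast (by omega : k ≠ 0)
    push_cast
    rw [mul_inv]
    field_simp
  rw [hA, hqq]
  refine ⟨V + 2 * E + 2 * GG * (SS + (p : ℤ_[p]) * E) - (p : ℤ_[p]) * (SS + (p : ℤ_[p]) * E) ^ 2, ?_⟩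
  have h2c : (((2 : ℤ_[p])) : ℚ_[p]) = 2 := by norm_cast
  push_cast [h2c]
  linear_combination (p : ℚ_[p]) * hVq
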